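/- In the Hopf algebra O(SL_q(2)), let χ: O(SL_q(2)) → k be the unique algebra homomorphism with χ(a) = q⁻¹, χ(b) = χ(c) = 0, χ(d) = q, and let ϑ: O(SL_q(2)) → O(SL_q(2)) be the unique algebra automorphism with ϑ(a) = q²a, ϑ(b) = b, ϑ(c) = c, ϑ(d) = q⁻²d (both exist). Then for every x ∈ O(SL_q(2)) one has χ(S(x₍₁₎)) · x₍₂₎ · χ(S(x₍₃₎)) = ϑ(x). (Equivalently, ϑ(x) = K⁻¹ ▷ x ◁ K⁻¹ for any Hopf pairing of U_q(sl₂) with O(SL_q(2)) taking the value χ on K.) -/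

import Mathlib

/-!
STATEMENT 4: In the Hopf algebra `O(SL_q(2))`, let `χ : O(SL_q(2)) → k` be the unique
algebra character with `χ(a)=q⁻¹, χ(b)=χ(c)=0, χ(d)=q`, and `ϑ` the unique algebra
automorphism with `ϑ(a)=q²a, ϑ(b)=b, ϑ(c)=c, ϑ(d)=q⁻²d`.  Then for every `x`,
`χ(S(x₍₁₎)) • x₍₂₎ • χ(S(x₍₃₎)) = ϑ(x)`; i.e. `ϑ(x) = K⁻¹ ▷ x ◁ K⁻¹`.
-/

open TensorProduct Coalgebra HopfAlgebra

theorem my_conv_apply_repr {R A : Type*} [CommSemiring R] [AddCommMonoid A] [Module R A]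
    [Coalgebra R A] (f h : A →ₗ[R] R) (x : A) {ι : Type*} (r : Coalgebra.Repr R x ι) :
    ((LinearMap.mul' R R) ∘ₗ (TensorProduct.map f h) ∘ₗ (comul (R := R))) x
      = ∑ i ∈ r.index, f (r.left i) * h (r.right i) := by
  simp only [LinearMap.coe_comp, Function.comp_apply, ← r.eq, map_sum,
    TensorProduct.map_tmul, LinearMap.mul'_apply]

theorem my_conv_unique {R A : Type*} [CommSemiring R] [AddCommMonoid A] [Module R A]
    [Coalgebra R A] (f g h : A →ₗ[R] R)
    (hf : (LinearMap.mul' R R) ∘ₗ (TensorProduct.map f h) ∘ₗ (comul (R := R))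
        = (counit : A →ₗ[R] R))
    (hg : (LinearMap.mul' R R) ∘ₗ (TensorProduct.map h g) ∘ₗ (comul (R := R))
        = (counit : A →ₗ[R] R)) :
    f = g := by
  have hf' : ∀ (x : A) (r : Coalgebra.Repr R x (A × A)),
      ∑ i ∈ r.index, f (r.left i) * h (r.right i) = Coalgebra.counit x := fun x r => by
    rw [← my_conv_apply_repr f h x r, hf]
  have hg' : ∀ (x : A) (r : Coalgebra.Repr R x (A × A)),
      ∑ i ∈ r.index, h (r.left i) * g (r.right i) = Coalgebra.counit x := fun x r => by
    rw [← my_conv_apply_repr h g x r, hg]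
  ext x
  obtain r := ℛ R x
  have E := Coalgebra.sum_tmul_tmul_eq r (fun i => ℛ R (r.left i)) (fun i => ℛ R (r.right i))
  have EΦ := congrArg
    ((LinearMap.mul' R R) ∘ₗ TensorProduct.map f ((LinearMap.mul' R R) ∘ₗ TensorProduct.map h g)) E
  simp only [map_sum, LinearMap.coe_comp, Function.comp_apply, TensorProduct.map_tmul,
    LinearMap.mul'_apply] at EΦ
  have hxL : ∑ i ∈ r.index, Coalgebra.counit (R := R) (r.left i) • (r.right i) = x := by
    have h1 := congrArg (TensorProduct.lid R A) (Coalgebra.sum_counit_tmul_eq r)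
    simp only [map_sum, TensorProduct.lid_tmul, one_smul] at h1
    exact h1
  have hxR : ∑ i ∈ r.index, Coalgebra.counit (R := R) (r.right i) • (r.left i) = x := by
    have h1 := congrArg (TensorProduct.rid R A) (Coalgebra.sum_tmul_counit_eq r)
    simp only [map_sum, TensorProduct.rid_tmul, one_smul] at h1
    exact h1
  have hL : ∑ i ∈ r.index, ∑ j ∈ (ℛ R (r.left i)).index,
      f ((ℛ R (r.left i)).left j) * (h ((ℛ R (r.left i)).right j) * g (r.right i))
      = g x := by
    calc ∑ i ∈ r.index, ∑ j ∈ (ℛ R (r.left i)).index,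
        f ((ℛ R (r.left i)).left j) * (h ((ℛ R (r.left i)).right j) * g (r.right i))
        = ∑ i ∈ r.index, Coalgebra.counit (R := R) (r.left i) * g (r.right i) := by
          refine Finset.sum_congr rfl fun i _ => ?_
          rw [← hf' (r.left i) (ℛ R (r.left i)), Finset.sum_mul]
          simp_rw [mul_assoc]
      _ = g (∑ i ∈ r.index, Coalgebra.counit (R := R) (r.left i) • (r.right i)) := by
          rw [map_sum]
          exact Finset.sum_congr rfl fun i _ => by rw [map_smul, smul_eq_mul]
      _ = g x := by rw [hxL]
  have hR : ∑ i ∈ r.index, ∑ j ∈ (ℛ R (r.right i)).index,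
      f (r.left i) * (h ((ℛ R (r.right i)).left j) * g ((ℛ R (r.right i)).right j))
      = f x := by
    calc ∑ i ∈ r.index, ∑ j ∈ (ℛ R (r.right i)).index,
        f (r.left i) * (h ((ℛ R (r.right i)).left j) * g ((ℛ R (r.right i)).right j))
        = ∑ i ∈ r.index, f (r.left i) * Coalgebra.counit (R := R) (r.right i) := by
          refine Finset.sum_congr rfl fun i _ => ?_
          rw [← hg' (r.right i) (ℛ R (r.right i)), Finset.mul_sum]
      _ = f (∑ i ∈ r.index, Coalgebra.counit (R := R) (r.right i) • (r.left i)) := by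
          rw [map_sum]
          exact Finset.sum_congr rfl fun i _ => by rw [map_smul, smul_eq_mul, mul_comm]
      _ = f x := by rw [hxR]
  rw [hL, hR] at EΦ
  exact EΦ.symm

set_option maxHeartbeats 2000000 in
set_option synthInstance.maxHeartbeats 400000 in
theorem stmt4_haar_modular_automorphism_eq_Kinv_bicoregular
    (k : Type*) [Field k] [CharZero k] (q : k) (hq : q ≠ 0) (hq2 : q ^ 2 ≠ 1)
    (O : Type*) [Ring O] [HopfAlgebra k O]
    (a b c d : O)
    -- relations of `O(SL_q(2))`
    (hab : a * b = q • (b * a)) (hac : a * c = q • (c * a))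
    (hbc : b * c = c * b) (hbd : b * d = q • (d * b)) (hcd : c * d = q • (d * c))
    (had : a * d - d * a = (q - q⁻¹) • (b * c)) (hdet : a * d - q • (b * c) = 1)
    -- coalgebra structure on the generators
    (hΔa : comul (R := k) a = a ⊗ₜ[k] a + b ⊗ₜ[k] c)
    (hΔb : comul (R := k) b = a ⊗ₜ[k] b + b ⊗ₜ[k] d)
    (hΔc : comul (R := k) c = c ⊗ₜ[k] a + d ⊗ₜ[k] c)
    (hΔd : comul (R := k) d = c ⊗ₜ[k] b + d ⊗ₜ[k] d)
    (hεa : counit (R := k) a = 1) (hεb : counit (R := k) b = 0)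
    (hεc : counit (R := k) c = 0) (hεd : counit (R := k) d = 1)
    (hSa : antipode (R := k) a = d) (hSb : antipode (R := k) b = -(q⁻¹ • b))
    (hSc : antipode (R := k) c = -(q • c)) (hSd : antipode (R := k) d = a)
    -- `a, b, c, d` generate `O(SL_q(2))` as an algebra
    (hgen : Algebra.adjoin k ({a, b, c, d} : Set O) = ⊤)
    -- the character `χ` with `χ(a)=q⁻¹, χ(b)=χ(c)=0, χ(d)=q`
    (χ : O →ₐ[k] k)
    (hχa : χ a = q⁻¹) (hχb : χ b = 0) (hχc : χ c = 0) (hχd : χ d = q)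
    -- the algebra automorphism `ϑ` with `ϑ(a)=q²a, ϑ(b)=b, ϑ(c)=c, ϑ(d)=q⁻²d`
    (ϑ : O ≃ₐ[k] O)
    (hϑa : ϑ a = (q ^ 2) • a) (hϑb : ϑ b = b) (hϑc : ϑ c = c)
    (hϑd : ϑ d = (q ^ 2)⁻¹ • d) :
    -- uniqueness of `χ` and `ϑ` with these values
    (∀ χ' : O →ₐ[k] k, χ' a = q⁻¹ → χ' b = 0 → χ' c = 0 → χ' d = q → χ' = χ) ∧
    (∀ ϑ' : O ≃ₐ[k] O, ϑ' a = (q ^ 2) • a → ϑ' b = b → ϑ' c = c →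
      ϑ' d = (q ^ 2)⁻¹ • d → ϑ' = ϑ) ∧
    -- the identity `χ(S(x₍₁₎)) • x₍₂₎ • χ(S(x₍₃₎)) = ϑ(x)`
    (∀ x : O,
      ((TensorProduct.lid k O).toLinearMap ∘ₗ
        (TensorProduct.rid k (k ⊗[k] O)).toLinearMap ∘ₗ
        (TensorProduct.map
          (TensorProduct.map (χ.toLinearMap ∘ₗ antipode (R := k)) LinearMap.id)
          (χ.toLinearMap ∘ₗ antipode (R := k))) ∘ₗ
        (LinearMap.rTensor O (comul (R := k))) ∘ₗ comul) x
      = ϑ x) := by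
  refine ⟨?_, ?_, ?_⟩
  · intro χ' h1 h2 h3 h4
    apply AlgHom.ext_of_adjoin_eq_top hgen
    rintro x hx
    simp only [Set.mem_insert_iff, Set.mem_singleton_iff] at hx
    rcases hx with rfl | rfl | rfl | rfl <;> simp_all
  · intro ϑ' h1 h2 h3 h4
    have hh : ϑ'.toAlgHom = ϑ.toAlgHom := by
      apply AlgHom.ext_of_adjoin_eq_top hgen
      rintro x hx
      simp only [Set.mem_insert_iff, Set.mem_singleton_iff] at hx
      rcases hx with rfl | rfl | rfl | rfl <;> simp_all
    exact AlgEquiv.ext fun x => AlgHom.congr_fun hh x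
  · set ψA : O →ₐ[k] k := χ.comp ϑ.toAlgHom with hψAdef
    have hψAa : ψA a = q := by
      simp only [hψAdef, AlgHom.comp_apply, AlgEquiv.toAlgHom_eq_coe, AlgEquiv.coe_toAlgHom, hϑa,
        map_smul, hχa, smul_eq_mul, sq]
      field_simp
    have hψAb : ψA b = 0 := by simp [hψAdef, hϑb, hχb]
    have hψAc : ψA c = 0 := by simp [hψAdef, hϑc, hχc]
    have hψAd : ψA d = q⁻¹ := by
      simp only [hψAdef, AlgHom.comp_apply, AlgEquiv.toAlgHom_eq_coe, AlgEquiv.coe_toAlgHom, hϑd,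
        map_smul, hχd, smul_eq_mul, sq]
      field_simp
    -- the convolution `χ ⋆ ψA` as an algebra character
    set η : O →ₐ[k] k :=
      ((Algebra.TensorProduct.lid k k).toAlgHom.comp
        ((Algebra.TensorProduct.map χ ψA).comp (Bialgebra.comulAlgHom k O))) with hηdef
    have hηrepr : ∀ (x : O) (r : Coalgebra.Repr k x (O × O)),
        η x = ∑ i ∈ r.index, χ (r.left i) * ψA (r.right i) := by
      intro x r
      show (Algebra.TensorProduct.lid k k) ((Algebra.TensorProduct.map χ ψA) (comul (R := k) x)) = _
      rw [← r.eq, map_sum, map_sum]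
      exact Finset.sum_congr rfl fun i _ => by
        simp [Algebra.TensorProduct.map_tmul, smul_eq_mul]
    have hη : η = Bialgebra.counitAlgHom k O := by
      apply AlgHom.ext_of_adjoin_eq_top hgen
      rintro x hx
      simp only [Set.mem_insert_iff, Set.mem_singleton_iff] at hx
      have hcomp : ∀ y : O, η y
          = (Algebra.TensorProduct.lid k k) ((Algebra.TensorProduct.map χ ψA) (comul (R := k) y)) :=
        fun y => rfl
      rcases hx with rfl | rfl | rfl | rfl
      · rw [hcomp, hΔa]
        simp only [map_add, Algebra.TensorProduct.map_tmul, Algebra.TensorProduct.lid_tmul,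
          Bialgebra.counitAlgHom_apply, hεa, hχa, hχb, hψAa, hψAc, smul_eq_mul]
        simp [hq]
      · rw [hcomp, hΔb]
        simp [hχa, hχb, hψAb, hψAd, hεb]
      · rw [hcomp, hΔc]
        simp [hχc, hχd, hψAa, hψAc, hεc]
      · rw [hcomp, hΔd]
        simp only [map_add, Algebra.TensorProduct.map_tmul, Algebra.TensorProduct.lid_tmul,
          Bialgebra.counitAlgHom_apply, hεd, hχc, hχd, hψAb, hψAd, smul_eq_mul]
        simp [hq]
    -- `χ ∘ S = ψA`
    have hψ : χ.toLinearMap ∘ₗ antipode (R := k) = ψA.toLinearMap := by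
      apply my_conv_unique _ _ χ.toLinearMap
      · ext x
        rw [my_conv_apply_repr _ _ x (ℛ k x)]
        have h1 := congrArg χ (HopfAlgebra.sum_antipode_mul_eq_algebraMap_counit (R := k) (ℛ k x))
        simp only [map_sum, map_mul, AlgHom.commutes, Algebra.algebraMap_self, RingHom.id_apply] at h1
        simpa using h1
      · ext x
        rw [my_conv_apply_repr _ _ x (ℛ k x)]
        have h1 := congrArg (fun (φ : O →ₐ[k] k) => φ x) hη
        simp only [Bialgebra.counitAlgHom_apply] at h1
        simp only [AlgHom.toLinearMap_apply]
        rw [← h1, hηrepr x (ℛ k x)]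
    -- the bicoregular action as an algebra hom
    set Tₐ : O →ₐ[k] O :=
      ((Algebra.TensorProduct.lid k O).toAlgHom.comp
        (((Algebra.TensorProduct.rid k k (k ⊗[k] O)).toAlgHom).comp
          ((Algebra.TensorProduct.map (Algebra.TensorProduct.map ψA (AlgHom.id k O)) ψA).comp
            ((Algebra.TensorProduct.map (Bialgebra.comulAlgHom k O) (AlgHom.id k O)).comp
              (Bialgebra.comulAlgHom k O))))) with hTdef
    have key : ∀ t : O ⊗[k] O,
        (TensorProduct.lid k O) ((TensorProduct.rid k (k ⊗[k] O))
          ((TensorProduct.map (TensorProduct.map ψA.toLinearMap LinearMap.id) ψA.toLinearMap)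
            ((LinearMap.rTensor O (comul (R := k))) t)))
        = (Algebra.TensorProduct.lid k O) ((Algebra.TensorProduct.rid k k (k ⊗[k] O))
            ((Algebra.TensorProduct.map (Algebra.TensorProduct.map ψA (AlgHom.id k O)) ψA)
              ((Algebra.TensorProduct.map (Bialgebra.comulAlgHom k O) (AlgHom.id k O)) t))) := by
      intro t
      induction t using TensorProduct.induction_on with
      | zero => simp
      | add s t hs ht => simp only [map_add, hs, ht]
      | tmul u v =>
        simp only [LinearMap.rTensor_tmul, Algebra.TensorProduct.map_tmul, AlgHom.coe_id,
          id_eq, Bialgebra.comulAlgHom_apply]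
        generalize (comul (R := k) u) = s
        induction s using TensorProduct.induction_on with
        | zero => simp [TensorProduct.zero_tmul]
        | add s t hs ht => simp only [TensorProduct.add_tmul, map_add, hs, ht]
        | tmul p r =>
          simp [TensorProduct.map_tmul, TensorProduct.lid_tmul, TensorProduct.rid_tmul,
            Algebra.TensorProduct.map_tmul, Algebra.TensorProduct.lid_tmul,
            Algebra.TensorProduct.rid_tmul, TensorProduct.smul_tmul', smul_smul]
    have hTapp : ∀ y : O,
        ((TensorProduct.lid k O).toLinearMap ∘ₗ
          (TensorProduct.rid k (k ⊗[k] O)).toLinearMap ∘ₗ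
          (TensorProduct.map
            (TensorProduct.map ψA.toLinearMap LinearMap.id) ψA.toLinearMap) ∘ₗ
          (LinearMap.rTensor O (comul (R := k))) ∘ₗ comul) y = Tₐ y := by
      intro y
      simp only [LinearMap.coe_comp, Function.comp_apply, LinearEquiv.coe_coe]
      exact key (comul y)
    have hTϑ : Tₐ = ϑ.toAlgHom := by
      apply AlgHom.ext_of_adjoin_eq_top hgen
      rintro x hx
      simp only [Set.mem_insert_iff, Set.mem_singleton_iff] at hx
      rcases hx with rfl | rfl | rfl | rfl
      · rw [← hTapp]
        simp only [LinearMap.coe_comp, Function.comp_apply, LinearEquiv.coe_coe, hΔa, map_add,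
          LinearMap.rTensor_tmul, hΔb, TensorProduct.add_tmul, TensorProduct.map_tmul,
          LinearMap.id_coe, id_eq, AlgHom.toLinearMap_apply, hψAa, hψAb, hψAc, hψAd,
          TensorProduct.rid_tmul, TensorProduct.lid_tmul, map_smul, smul_smul,
          AlgEquiv.toAlgHom_eq_coe, AlgEquiv.coe_toAlgHom, hϑa]
        simp [TensorProduct.smul_tmul', smul_smul, sq]
      · rw [← hTapp]
        simp only [LinearMap.coe_comp, Function.comp_apply, LinearEquiv.coe_coe, hΔb, map_add,
          LinearMap.rTensor_tmul, hΔa, TensorProduct.add_tmul, TensorProduct.map_tmul,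
          LinearMap.id_coe, id_eq, AlgHom.toLinearMap_apply, hψAa, hψAb, hψAc, hψAd,
          TensorProduct.rid_tmul, TensorProduct.lid_tmul, map_smul, smul_smul,
          AlgEquiv.toAlgHom_eq_coe, AlgEquiv.coe_toAlgHom, hϑb]
        simp [TensorProduct.smul_tmul', smul_smul, inv_mul_cancel₀ hq, mul_inv_cancel₀ hq]
      · rw [← hTapp]
        simp only [LinearMap.coe_comp, Function.comp_apply, LinearEquiv.coe_coe, hΔc, map_add,
          LinearMap.rTensor_tmul, hΔd, TensorProduct.add_tmul, TensorProduct.map_tmul,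
          LinearMap.id_coe, id_eq, AlgHom.toLinearMap_apply, hψAa, hψAb, hψAc, hψAd,
          TensorProduct.rid_tmul, TensorProduct.lid_tmul, map_smul, smul_smul,
          AlgEquiv.toAlgHom_eq_coe, AlgEquiv.coe_toAlgHom, hϑc]
        simp [TensorProduct.smul_tmul', smul_smul, inv_mul_cancel₀ hq, mul_inv_cancel₀ hq]
      · rw [← hTapp]
        simp only [LinearMap.coe_comp, Function.comp_apply, LinearEquiv.coe_coe, hΔd, map_add,
          LinearMap.rTensor_tmul, hΔc, TensorProduct.add_tmul, TensorProduct.map_tmul,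
          LinearMap.id_coe, id_eq, AlgHom.toLinearMap_apply, hψAa, hψAb, hψAc, hψAd,
          TensorProduct.rid_tmul, TensorProduct.lid_tmul, map_smul, smul_smul,
          AlgEquiv.toAlgHom_eq_coe, AlgEquiv.coe_toAlgHom, hϑd]
        simp [TensorProduct.smul_tmul', smul_smul, sq, mul_inv]
    intro x
    rw [hψ, hTapp x, hTϑ]
    simp
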